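/- Completeness of the biclique reduction: let G = (V, E) be a simple undirected graph, ρ ≥ 0, and r ≥ 1 an integer. Suppose G contains two disjoint vertex sets S, T with |S| = |T| = r such that every vertex of S is adjacent to every vertex of T. Then there exists μ ∈ Δ_V (namely the uniform distribution on S) with val(μ) ≥ 1 − ρ/r. -/

import Mathlib

open Finset

/-- The value of the network security game on a graph with adjacency matrix `B`
and parameter `ρ`, at posterior `μ`:
`val(μ) = max_{x ∈ Δ_V} ( xᵀBμ - ρ·max_v (x_v + μ_v) )`. -/
noncomputable def nsVal (V : Type*) [Fintype V] (B : Matrix V V ℝ) (ρ : ℝ)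
    (μ : V → ℝ) : ℝ :=
  sSup {t : ℝ | ∃ x ∈ stdSimplex ℝ V,
    t = (∑ v : V, ∑ w : V, x v * B v w * μ w) - ρ * ⨆ v : V, (x v + μ v)}

/-- Completeness of the biclique reduction: if a simple graph `G` contains two
disjoint `r`-element vertex sets `S`, `T` with every vertex of `S` adjacent to
every vertex of `T`, then some posterior `μ ∈ Δ_V` (namely the uniform
distribution on `S`) has network-security-game value at least `1 - ρ/r`. -/
theorem biclique_completeness (V : Type*) [Fintype V] [DecidableEq V]
    (G : SimpleGraph V) [DecidableRel G.Adj]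
    (ρ : ℝ) (hρ : 0 ≤ ρ) (r : ℕ) (hr : 1 ≤ r)
    (S T : Finset V) (hST : Disjoint S T) (hS : S.card = r) (hT : T.card = r)
    (hadj : ∀ u ∈ S, ∀ v ∈ T, G.Adj u v) :
    ∃ μ ∈ stdSimplex ℝ V,
      1 - ρ / r ≤ nsVal V (fun u v => if G.Adj u v then (1 : ℝ) else 0) ρ μ := by
  have hr0 : (0:ℝ) < (r:ℝ) := by exact_mod_cast Nat.lt_of_lt_of_le Nat.zero_lt_one hr
  have hrinv : (0:ℝ) ≤ (r:ℝ)⁻¹ := by positivity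
  obtain ⟨v₀, hv₀⟩ : S.Nonempty := Finset.card_pos.mp (by omega)
  have : Nonempty V := ⟨v₀⟩
  set μ : V → ℝ := fun v => if v ∈ S then (r:ℝ)⁻¹ else 0 with hμdef
  set x : V → ℝ := fun v => if v ∈ T then (r:ℝ)⁻¹ else 0 with hxdef
  have hμnn : ∀ v, 0 ≤ μ v := fun v => by by_cases h : v ∈ S <;> simp [hμdef, h, hrinv]
  have hxnn : ∀ v, 0 ≤ x v := fun v => by by_cases h : v ∈ T <;> simp [hxdef, h, hrinv]
  have hsumS : ∑ v : V, μ v = 1 := by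
    simp only [hμdef, Finset.sum_ite_mem, Finset.univ_inter, Finset.sum_const, hS,
      nsmul_eq_mul]
    field_simp
  have hsumT : ∑ v : V, x v = 1 := by
    simp only [hxdef, Finset.sum_ite_mem, Finset.univ_inter, Finset.sum_const, hT,
      nsmul_eq_mul]
    field_simp
  have hμmem : μ ∈ stdSimplex ℝ V := ⟨hμnn, hsumS⟩
  have hxmem : x ∈ stdSimplex ℝ V := ⟨hxnn, hsumT⟩
  refine ⟨μ, hμmem, ?_⟩
  set B : Matrix V V ℝ := fun u v => if G.Adj u v then (1:ℝ) else 0 with hBdef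
  have hB01 : ∀ u v, 0 ≤ B u v ∧ B u v ≤ 1 := fun u v => by
    by_cases h : G.Adj u v <;> simp [hBdef, h]
  -- the payoff sum for our x, μ equals 1
  have hpay : (∑ v : V, ∑ w : V, x v * B v w * μ w) = 1 := by
    have hterm : ∀ v w : V, x v * B v w * μ w =
        (if v ∈ T then (if w ∈ S then (r:ℝ)⁻¹ * (r:ℝ)⁻¹ else 0) else 0) := by
      intro v w
      by_cases hv : v ∈ T
      · by_cases hw : w ∈ S
        · have : G.Adj v w := (hadj w hw v hv).symm
          simp [hμdef, hxdef, hBdef, hv, hw, this]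
        · simp [hμdef, hxdef, hv, hw]
      · simp [hxdef, hv]
    simp only [hterm, Finset.sum_ite_mem, Finset.univ_inter, Finset.sum_const, hS, hT,
      nsmul_eq_mul]
    field_simp
    have h1 : ∀ y : V, (∑ z : V, if y ∈ T then if z ∈ S then 1 / (r:ℝ)^2 else 0 else 0)
        = if y ∈ T then (r:ℝ) * (1 / (r:ℝ)^2) else 0 := by
      intro y; split_ifs <;> simp [Finset.sum_ite_mem, hS]
    simp only [h1, Finset.sum_ite_mem, Finset.univ_inter, Finset.sum_const, hT, nsmul_eq_mul]
    field_simp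
  -- the sup term equals 1/r
  have hsup : (⨆ v : V, (x v + μ v)) = (r:ℝ)⁻¹ := by
    apply le_antisymm
    · apply ciSup_le
      intro v
      by_cases hv : v ∈ S
      · have hv' : v ∉ T := fun h => (Finset.disjoint_left.mp hST hv) h
        simp [hμdef, hxdef, hv, hv']
      · by_cases hv' : v ∈ T
        · simp [hμdef, hxdef, hv, hv']
        · simp [hμdef, hxdef, hv, hv', hrinv]
    · have h1 : x v₀ + μ v₀ = (r:ℝ)⁻¹ := by
        have hv' : v₀ ∉ T := fun h => (Finset.disjoint_left.mp hST hv₀) h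
        simp [hμdef, hxdef, hv₀, hv']
      calc (r:ℝ)⁻¹ = x v₀ + μ v₀ := h1.symm
        _ ≤ ⨆ v : V, (x v + μ v) := le_ciSup (f := fun v => x v + μ v) (Set.Finite.bddAbove (Set.finite_range _)) v₀
  -- bounded above by 1
  have hbdd : BddAbove {t : ℝ | ∃ y ∈ stdSimplex ℝ V,
      t = (∑ v : V, ∑ w : V, y v * B v w * μ w) - ρ * ⨆ v : V, (y v + μ v)} := by
    refine ⟨1, ?_⟩
    rintro t ⟨y, ⟨hynn, hysum⟩, rfl⟩
    have hle : (∑ v : V, ∑ w : V, y v * B v w * μ w) ≤ 1 := by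
      calc (∑ v : V, ∑ w : V, y v * B v w * μ w)
          ≤ ∑ v : V, ∑ w : V, y v * 1 * μ w := by
            apply Finset.sum_le_sum; intro v _
            apply Finset.sum_le_sum; intro w _
            have := hB01 v w
            apply mul_le_mul_of_nonneg_right _ (hμnn w)
            nlinarith [hynn v, this.1, this.2]
        _ = (∑ v : V, y v) * (∑ w : V, μ w) := by
            rw [Finset.sum_mul]
            apply Finset.sum_congr rfl
            intro v _; rw [Finset.mul_sum]; simp [mul_comm]
        _ = 1 := by rw [hysum, hsumS, one_mul]
    have hsup0 : 0 ≤ ⨆ v : V, (y v + μ v) := by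
      have : y v₀ + μ v₀ ≤ ⨆ v : V, (y v + μ v) :=
        le_ciSup (f := fun v => y v + μ v) (Set.Finite.bddAbove (Set.finite_range _)) v₀
      have h0 : 0 ≤ y v₀ + μ v₀ := add_nonneg (hynn v₀) (hμnn v₀)
      linarith
    have : 0 ≤ ρ * ⨆ v : V, (y v + μ v) := mul_nonneg hρ hsup0
    linarith
  have hmem : (1 - ρ / r) ∈ {t : ℝ | ∃ y ∈ stdSimplex ℝ V,
      t = (∑ v : V, ∑ w : V, y v * B v w * μ w) - ρ * ⨆ v : V, (y v + μ v)} := by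
    refine ⟨x, hxmem, ?_⟩
    rw [hpay, hsup]
    ring
  exact le_csSup hbdd hmem
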